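/- Let S ∈ ℝ^{n×k} and A ∈ ℝ^{m×k} with m ≤ n, and suppose S Aᵀ has rank m. Then the maximizer of tr(Ωᵀ S Aᵀ) over Ω ∈ ℝ^{n×m} with ΩᵀΩ = I_m is unique, and equals U Vᵀ for any thin SVD S Aᵀ = U Σ Vᵀ. -/

import Mathlib

open Matrix BigOperators

/-- If `S Aᵀ ∈ ℝ^{n×m}` (`m ≤ n`) has full rank `m`, then the
maximizer of `tr(Ωᵀ S Aᵀ)` over semi-orthogonal `Ω ∈ ℝ^{n×m}` is unique and
equals `U Vᵀ` for any thin SVD `S Aᵀ = U Σ Vᵀ`. -/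
theorem procrustes_unique_maximizer (n k m : ℕ) (hmn : m ≤ n)
    (S : Matrix (Fin n) (Fin k) ℝ) (A : Matrix (Fin m) (Fin k) ℝ)
    (hrank : (S * Aᵀ).rank = m)
    (U : Matrix (Fin n) (Fin m) ℝ) (hU : Uᵀ * U = 1)
    (V : Matrix (Fin m) (Fin m) ℝ) (hV : Vᵀ * V = 1)
    (σ : Fin m → ℝ) (hσ0 : ∀ i, 0 ≤ σ i) (hσmono : Antitone σ)
    (hSVD : S * Aᵀ = U * Matrix.diagonal σ * Vᵀ)
    (Ω : Matrix (Fin n) (Fin m) ℝ) (hΩ : Ωᵀ * Ω = 1)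
    (hmax : ∀ Ω' : Matrix (Fin n) (Fin m) ℝ, Ω'ᵀ * Ω' = 1 →
      Matrix.trace (Ω'ᵀ * (S * Aᵀ)) ≤ Matrix.trace (Ωᵀ * (S * Aᵀ))) :
    Ω = U * Vᵀ := by
  -- V is orthogonal
  have hVV : V * Vᵀ = 1 := mul_eq_one_comm.mp hV
  -- all singular values are positive
  have hσpos : ∀ i, 0 < σ i := by
    intro i
    rcases (hσ0 i).lt_or_eq with h | h
    · exact h
    · exfalso
      have h1 : (S * Aᵀ).rank ≤ (Matrix.diagonal σ).rank := by
        rw [hSVD]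
        calc (U * Matrix.diagonal σ * Vᵀ).rank ≤ (U * Matrix.diagonal σ).rank :=
              Matrix.rank_mul_le_left _ _
          _ ≤ (Matrix.diagonal σ).rank := Matrix.rank_mul_le_right _ _
      rw [hrank, Matrix.rank_diagonal] at h1
      have h2 : Fintype.card {j // σ j ≠ 0} < Fintype.card (Fin m) :=
        Fintype.card_subtype_lt (x := i) (by simp [← h])
      rw [Fintype.card_fin] at h2
      omega
  set W : Matrix (Fin n) (Fin m) ℝ := Ω * V with hWdef
  have hWW : Wᵀ * W = 1 := by
    rw [hWdef, Matrix.transpose_mul, Matrix.mul_assoc, ← Matrix.mul_assoc Ωᵀ, hΩ,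
      Matrix.one_mul, hV]
  -- column normalizations
  have hUcol : ∀ i, ∑ x, U x i ^ 2 = 1 := by
    intro i
    have := congrFun (congrFun hU i) i
    simpa [Matrix.mul_apply, Matrix.one_apply, sq] using this
  have hWcol : ∀ i, ∑ x, W x i ^ 2 = 1 := by
    intro i
    have := congrFun (congrFun hWW i) i
    simpa [Matrix.mul_apply, Matrix.one_apply, sq] using this
  -- the diagonal of Wᵀ U
  set q : Fin m → ℝ := fun i => ∑ x, W x i * U x i with hqdef
  have hq1 : ∀ i, q i ≤ 1 := by
    intro i
    have hcs := Finset.sum_mul_sq_le_sq_mul_sq Finset.univ (fun x => W x i) (fun x => U x i)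
    rw [hWcol i, hUcol i, one_mul] at hcs
    nlinarith [hcs]
  -- trace of the objective at Ω
  have htr : Matrix.trace (Ωᵀ * (S * Aᵀ)) = ∑ i, q i * σ i := by
    rw [hSVD, show Ωᵀ * (U * Matrix.diagonal σ * Vᵀ)
        = (Ωᵀ * (U * Matrix.diagonal σ)) * Vᵀ from (Matrix.mul_assoc _ _ _).symm,
      Matrix.trace_mul_comm]
    have e : Vᵀ * (Ωᵀ * (U * Matrix.diagonal σ)) = (Wᵀ * U) * Matrix.diagonal σ := by
      simp only [hWdef, Matrix.transpose_mul, Matrix.mul_assoc]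
    rw [e]
    simp only [Matrix.trace, Matrix.diag_apply, Matrix.mul_diagonal]
    simp only [Matrix.mul_apply, Matrix.transpose_apply]
    rfl
  -- trace of the objective at U Vᵀ
  have htrUV : Matrix.trace ((U * Vᵀ)ᵀ * (S * Aᵀ)) = ∑ i, σ i := by
    have e : (U * Vᵀ)ᵀ * (S * Aᵀ) = V * (Matrix.diagonal σ * Vᵀ) := by
      rw [hSVD]
      simp only [Matrix.transpose_mul, Matrix.transpose_transpose, Matrix.mul_assoc]
      rw [← Matrix.mul_assoc Uᵀ U, hU, Matrix.one_mul]
    rw [e, Matrix.trace_mul_comm, Matrix.mul_assoc, hV, Matrix.mul_one,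
      Matrix.trace_diagonal]
  -- U Vᵀ is semi-orthogonal, so the max at Ω dominates it
  have hUVorth : (U * Vᵀ)ᵀ * (U * Vᵀ) = 1 := by
    simp only [Matrix.transpose_mul, Matrix.transpose_transpose, Matrix.mul_assoc]
    rw [← Matrix.mul_assoc Uᵀ U, hU, Matrix.one_mul, hVV]
  have hge : ∑ i, σ i ≤ ∑ i, q i * σ i := by
    rw [← htrUV, ← htr]; exact hmax _ hUVorth
  -- hence every q i = 1
  have hqeq : ∀ i, q i = 1 := by
    have hsum : ∑ i, (1 - q i) * σ i ≤ 0 := by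
      have : ∑ i, (1 - q i) * σ i = ∑ i, σ i - ∑ i, q i * σ i := by
        rw [← Finset.sum_sub_distrib]; congr 1 with i; ring
      rw [this]; linarith
    have hterm : ∀ i ∈ Finset.univ, (0 : ℝ) ≤ (1 - q i) * σ i := fun i _ =>
      mul_nonneg (by linarith [hq1 i]) (hσ0 i)
    have hzero : ∀ i ∈ Finset.univ, (1 - q i) * σ i = 0 := by
      intro i hi
      have := (Finset.sum_eq_zero_iff_of_nonneg hterm).mp
        (le_antisymm hsum (Finset.sum_nonneg hterm))
      exact this i hi
    intro i
    have := hzero i (Finset.mem_univ i)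
    rcases mul_eq_zero.mp this with h | h
    · linarith
    · exact absurd h (ne_of_gt (hσpos i))
  -- equality in Cauchy-Schwarz forces W = U columnwise
  have hWU : W = U := by
    ext x i
    have hsq : ∑ y, (W y i - U y i) ^ 2 = 0 := by
      have : ∑ y, (W y i - U y i) ^ 2
          = (∑ y, W y i ^ 2) + (∑ y, U y i ^ 2) - 2 * ∑ y, W y i * U y i := by
        rw [Finset.mul_sum, ← Finset.sum_add_distrib, ← Finset.sum_sub_distrib]
        congr 1 with y; ring
      have hqi : ∑ x, W x i * U x i = 1 := hqeq i
      rw [this, hWcol i, hUcol i, hqi]; norm_num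
    have := (Finset.sum_eq_zero_iff_of_nonneg (fun y _ => sq_nonneg _)).mp hsq
      x (Finset.mem_univ x)
    have := pow_eq_zero_iff (n := 2) (by norm_num) |>.mp this
    linarith [this]
  calc Ω = Ω * (V * Vᵀ) := by rw [hVV, Matrix.mul_one]
    _ = W * Vᵀ := by rw [hWdef, Matrix.mul_assoc]
    _ = U * Vᵀ := by rw [hWU]
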